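/- Let λ be a partition with ℓ(λ) < n and gcd(n, |λ|) = 1. Then n divides the cardinality of SSYT_n(λ). -/

import Mathlib

open Finset

/-- Semistandard Young tableaux of shape `μ` with entries in `{0, …, n-1}`
(the 0-indexed version of entries in `{1, …, n}`). -/
def SSYTn (μ : YoungDiagram) (n : ℕ) : Type :=
  {T : SemistandardYoungTableau μ // ∀ i j : ℕ, (i, j) ∈ μ → T i j < n}

noncomputable instance (μ : YoungDiagram) (n : ℕ) : Fintype (SSYTn μ n) := by
  apply Fintype.ofInjective
    (fun (T : SSYTn μ n) (c : μ.cells) =>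
      (⟨T.1 c.1.1 c.1.2,
        Nat.lt_succ_of_lt (T.2 c.1.1 c.1.2 c.2)⟩ :
        Fin (n + 1)))
  intro T T' h
  apply Subtype.ext
  apply SemistandardYoungTableau.ext
  intro i j
  by_cases hij : (i, j) ∈ μ
  · have := congrFun h ⟨(i, j), (YoungDiagram.mem_cells _).mpr hij⟩
    simpa using congrArg Fin.val this
  · rw [T.1.zeros hij, T'.1.zeros hij]

/-- The content of a tableau: `ssytContent μ n T k` is the number of entries of `T`
equal to `k` (0-indexed). -/
def ssytContent (μ : YoungDiagram) (n : ℕ) (T : SSYTn μ n) : Fin n → ℕ :=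
  fun k => (μ.cells.filter (fun c => T.1 c.1 c.2 = (k : ℕ))).card

/-- The cyclic shift `c(x_1,…,x_n) = (x_n, x_1, …, x_{n-1})` (0-indexed). -/
def cycShift {n : ℕ} {α : Type*} (x : Fin n → α) : Fin n → α :=
  fun i => if _h : (i : ℕ) = 0 then x ⟨n - 1, by have := i.isLt; omega⟩
           else x ⟨(i : ℕ) - 1, by have := i.isLt; omega⟩


namespace BK

open scoped Classical

variable (μ : YoungDiagram) (i : ℕ) (T : SemistandardYoungTableau μ)

/-- A cell is "free" for the Bender–Knuth move at level `i`. -/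
def Free (r c : ℕ) : Prop :=
  (r, c) ∈ μ ∧ ((T r c = i ∧ T (r+1) c ≠ i + 1) ∨ (T r c = i + 1 ∧ (r = 0 ∨ T (r-1) c ≠ i)))

/-- Columns of free cells in row `r`. -/
noncomputable def frees (r : ℕ) : Finset ℕ :=
  (Finset.range (μ.rowLen r)).filter (fun c => Free μ i T r c)

noncomputable def bcnt (r : ℕ) : ℕ := ((frees μ i T r).filter (fun c => T r c = i+1)).card
noncomputable def acnt (r : ℕ) : ℕ := ((frees μ i T r).filter (fun c => T r c = i)).card
noncomputable def pos (r c : ℕ) : ℕ := ((frees μ i T r).filter (fun c' => c' < c)).card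

noncomputable def bkFun (r c : ℕ) : ℕ :=
  if Free μ i T r c then (if pos μ i T r c < bcnt μ i T r then i else i+1) else T r c

variable {μ i T}

lemma Free.mem {r c : ℕ} (h : Free μ i T r c) : (r, c) ∈ μ := h.1

lemma Free.val {r c : ℕ} (h : Free μ i T r c) : T r c = i ∨ T r c = i + 1 :=
  h.2.imp And.left And.left

lemma mem_frees {r c : ℕ} : c ∈ frees μ i T r ↔ Free μ i T r c := by
  simp only [frees, mem_filter, Finset.mem_range]
  exact ⟨fun h => h.2, fun h => ⟨YoungDiagram.mem_iff_lt_rowLen.mp h.mem, h⟩⟩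

/-- A non-free cell with value `i` has an `i+1` directly below. -/
lemma fixed_i {r c : ℕ} (hm : (r, c) ∈ μ) (hv : T r c = i) (hnf : ¬ Free μ i T r c) :
    T (r+1) c = i + 1 := by
  by_contra h
  exact hnf ⟨hm, Or.inl ⟨hv, h⟩⟩

/-- A non-free cell with value `i+1` has an `i` directly above. -/
lemma fixed_i1 {r c : ℕ} (hm : (r, c) ∈ μ) (hv : T r c = i + 1) (hnf : ¬ Free μ i T r c) :
    r ≠ 0 ∧ T (r-1) c = i := by
  by_contra h
  push_neg at h
  apply hnf
  refine ⟨hm, Or.inr ⟨hv, ?_⟩⟩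
  by_cases hr : r = 0
  · exact Or.inl hr
  · exact Or.inr (h hr)

lemma bkFun_of_not_free {r c : ℕ} (h : ¬ Free μ i T r c) : bkFun μ i T r c = T r c :=
  if_neg h

lemma bkFun_of_free {r c : ℕ} (h : Free μ i T r c) :
    bkFun μ i T r c = if pos μ i T r c < bcnt μ i T r then i else i + 1 :=
  if_pos h

lemma bkFun_mem_of_free {r c : ℕ} (h : Free μ i T r c) :
    bkFun μ i T r c = i ∨ bkFun μ i T r c = i + 1 := by
  rw [bkFun_of_free h]
  split <;> simp

lemma bkFun_of_not_val {r c : ℕ} (h1 : T r c ≠ i) (h2 : T r c ≠ i + 1) :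
    bkFun μ i T r c = T r c := by
  by_cases hf : Free μ i T r c
  · rcases hf.val with h | h <;> simp_all
  · exact bkFun_of_not_free hf

end BK

namespace BK
open scoped Classical
variable {μ : YoungDiagram} {i : ℕ} {T : SemistandardYoungTableau μ}

lemma mem_of_val_ne_zero {r c : ℕ} (h : T r c ≠ 0) : (r, c) ∈ μ := by
  by_contra hm; exact h (T.zeros hm)

lemma row_weak_adj {r c : ℕ} (hm : (r, c+1) ∈ μ) :
    bkFun μ i T r c ≤ bkFun μ i T r (c+1) := by
  have hm0 : (r, c) ∈ μ := μ.up_left_mem le_rfl (Nat.le_succ c) hm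
  have huv : T r c ≤ T r (c+1) := T.row_weak (Nat.lt_succ_self c) hm
  by_cases hfu : Free μ i T r c <;> by_cases hfv : Free μ i T r (c+1)
  · -- both free
    have hpos : pos μ i T r c < pos μ i T r (c+1) := by
      apply Finset.card_lt_card
      constructor
      · intro x hx; simp only [Finset.mem_filter] at hx ⊢; exact ⟨hx.1, by omega⟩
      · intro hsub
        have h1 : c ∈ (frees μ i T r).filter (fun c' => c' < c+1) := by
          simp [mem_frees.mpr hfu]
        have h2 := hsub h1
        simp at h2
    rw [bkFun_of_free hfu, bkFun_of_free hfv]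
    split <;> split <;> omega
  · -- left free, right not
    have hui : i ≤ T r c := by rcases hfu.val with h | h <;> omega
    have hv : T r (c+1) ≠ i := by
      intro hv
      have hu : T r c = i := by omega
      have hb : T (r+1) (c+1) = i + 1 := fixed_i hm hv hfv
      have hmb : (r+1, c+1) ∈ μ := mem_of_val_ne_zero (by rw [hb]; omega)
      have hmb0 : (r+1, c) ∈ μ := μ.up_left_mem le_rfl (Nat.le_succ c) hmb
      have h1 : T (r+1) c ≤ T (r+1) (c+1) := T.row_weak (Nat.lt_succ_self c) hmb
      have h2 : T r c < T (r+1) c := T.col_strict (Nat.lt_succ_self r) hmb0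
      rcases hfu.2 with ⟨-, hy⟩ | ⟨hx, -⟩
      · exact hy (by omega)
      · omega
    rw [bkFun_of_free hfu, bkFun_of_not_free hfv]
    split <;> omega
  · -- right free, left not
    rw [bkFun_of_not_free hfu, bkFun_of_free hfv]
    suffices h : T r c ≤ i by split <;> omega
    by_contra h
    push_neg at h
    have hvv : T r (c+1) = i + 1 := by rcases hfv.val with h' | h' <;> omega
    have hu : T r c = i + 1 := by omega
    obtain ⟨hr0, habove⟩ := fixed_i1 hm0 hu hfu
    have hm1 : (r-1, c+1) ∈ μ := μ.up_left_mem (Nat.sub_le r 1) le_rfl hm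
    have h1 : T (r-1) (c+1) < T r (c+1) := T.col_strict (by omega) hm
    have h2 : T (r-1) c ≤ T (r-1) (c+1) := T.row_weak (Nat.lt_succ_self c) hm1
    rcases hfv.2 with ⟨hx, -⟩ | ⟨hx, hy | hy⟩
    · omega
    · omega
    · omega
  · rw [bkFun_of_not_free hfu, bkFun_of_not_free hfv]; exact huv

lemma col_strict_adj {r c : ℕ} (hm : (r+1, c) ∈ μ) :
    bkFun μ i T r c < bkFun μ i T (r+1) c := by
  have hm0 : (r, c) ∈ μ := μ.up_left_mem (Nat.le_succ r) le_rfl hm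
  have huv : T r c < T (r+1) c := T.col_strict (Nat.lt_succ_self r) hm
  by_cases h1 : T r c = i ∨ T r c = i + 1
  · by_cases h2 : T (r+1) c = i + 1
    · have hu : T r c = i := by omega
      have hnfu : ¬ Free μ i T r c := by
        rintro ⟨-, ⟨-, hb⟩ | ⟨hx, -⟩⟩
        · exact hb h2
        · omega
      have hnfv : ¬ Free μ i T (r+1) c := by
        rintro ⟨-, ⟨hx, -⟩ | ⟨-, hy | hy⟩⟩
        · omega
        · omega
        · rw [Nat.add_sub_cancel] at hy; omega
      rw [bkFun_of_not_free hnfu, bkFun_of_not_free hnfv]; omega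
    · have hv2 : i + 2 ≤ T (r+1) c := by omega
      have he : bkFun μ i T (r+1) c = T (r+1) c := bkFun_of_not_val (by omega) (by omega)
      have hb : bkFun μ i T r c ≤ i + 1 := by
        by_cases hf : Free μ i T r c
        · rcases bkFun_mem_of_free hf with h | h <;> omega
        · rw [bkFun_of_not_free hf]; omega
      omega
  · push_neg at h1
    rw [bkFun_of_not_val h1.1 h1.2]
    by_cases h2 : T (r+1) c = i ∨ T (r+1) c = i + 1
    · have hu : T r c < i := by omega
      have hge : i ≤ bkFun μ i T (r+1) c := by
        by_cases hf : Free μ i T (r+1) c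
        · rcases bkFun_mem_of_free hf with h | h <;> omega
        · rw [bkFun_of_not_free hf]; omega
      omega
    · push_neg at h2
      rw [bkFun_of_not_val h2.1 h2.2]; exact huv

/-- The Bender–Knuth move as a semistandard Young tableau. -/
noncomputable def bk (μ : YoungDiagram) (i : ℕ) (T : SemistandardYoungTableau μ) :
    SemistandardYoungTableau μ where
  entry := bkFun μ i T
  row_weak' := by
    intro r j1 j2 hj hm
    induction j2 with
    | zero => omega
    | succ j ih =>
      have hadj : bkFun μ i T r j ≤ bkFun μ i T r (j+1) := row_weak_adj hm
      rcases Nat.lt_or_ge j1 j with h | h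
      · exact le_trans (ih h (μ.up_left_mem le_rfl (Nat.le_succ j) hm)) hadj
      · have : j1 = j := by omega
        subst this; exact hadj
  col_strict' := by
    intro r1 r2 c h hm
    induction r2 with
    | zero => omega
    | succ r ih =>
      have hadj : bkFun μ i T r c < bkFun μ i T (r+1) c := col_strict_adj hm
      rcases Nat.lt_or_ge r1 r with h' | h'
      · exact lt_trans (ih h' (μ.up_left_mem (Nat.le_succ r) le_rfl hm)) hadj
      · have : r1 = r := by omega
        subst this; exact hadj
  zeros' := by
    intro r c hm
    have : ¬ Free μ i T r c := fun h => hm h.mem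
    rw [bkFun_of_not_free this, T.zeros hm]

@[simp] lemma bk_apply (r c : ℕ) : bk μ i T r c = bkFun μ i T r c := rfl

end BK

namespace BK
open scoped Classical
variable {μ : YoungDiagram} {i : ℕ} {T : SemistandardYoungTableau μ}

/-- Generic rank lemma: among the elements of `S`, exactly `b` have rank `< b`. -/
lemma rank_filter_card (S : Finset ℕ) (b : ℕ) (hb : b ≤ S.card) :
    (S.filter (fun c => (S.filter (· < c)).card < b)).card = b := by
  set rk : ℕ → ℕ := fun c => (S.filter (· < c)).card with hrk
  have hmono : ∀ c ∈ S, ∀ c' ∈ S, c < c' → rk c < rk c' := by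
    intro c hc c' hc' hlt
    apply Finset.card_lt_card
    constructor
    · intro x hx; simp only [Finset.mem_filter] at hx ⊢; exact ⟨hx.1, by omega⟩
    · intro hsub
      have h1 : c ∈ S.filter (· < c') := by simp [hc, hlt]
      have := hsub h1
      simp at this
  have hinj : Set.InjOn rk S := by
    intro c hc c' hc' he
    rcases lt_trichotomy c c' with h | h | h
    · exact absurd he (Nat.ne_of_lt (hmono c hc c' hc' h))
    · exact h
    · exact absurd he.symm (Nat.ne_of_lt (hmono c' hc' c hc h))
  have hlt : ∀ c ∈ S, rk c < S.card := by
    intro c hc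
    apply Finset.card_lt_card
    constructor
    · exact Finset.filter_subset _ _
    · intro hsub
      have := hsub hc
      simp at this
  have himg : S.image rk = Finset.range S.card := by
    apply Finset.eq_of_subset_of_card_le
    · intro x hx
      simp only [Finset.mem_image] at hx
      obtain ⟨c, hc, rfl⟩ := hx
      exact Finset.mem_range.mpr (hlt c hc)
    · rw [Finset.card_range, Finset.card_image_of_injOn hinj]
  have key : (S.filter (fun c => rk c < b)).image rk = (Finset.range S.card).filter (· < b) := by
    rw [← himg]
    exact (Finset.filter_image (p := (· < b))).symm
  have hcard : (S.filter (fun c => rk c < b)).card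
      = ((Finset.range S.card).filter (· < b)).card := by
    rw [← key, Finset.card_image_of_injOn (hinj.mono (Finset.filter_subset _ _))]
  rw [hcard]
  have : (Finset.range S.card).filter (· < b) = Finset.range b := by
    ext x
    simp only [Finset.mem_filter, Finset.mem_range]
    omega
  rw [this, Finset.card_range]

lemma acnt_add_bcnt (r : ℕ) : acnt μ i T r + bcnt μ i T r = (frees μ i T r).card := by
  rw [acnt, bcnt]
  have : (frees μ i T r).filter (fun c => T r c = i + 1)
      = (frees μ i T r).filter (fun c => ¬ T r c = i) := by
    apply Finset.filter_congr
    intro c hc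
    have := (mem_frees.mp hc).val
    constructor
    · intro h; omega
    · intro h; omega
  rw [this]
  exact Finset.card_filter_add_card_filter_not _

lemma bcnt_le (r : ℕ) : bcnt μ i T r ≤ (frees μ i T r).card := Finset.card_filter_le _ _

/-- After the BK move, the number of `i`s among free cells of a row is the old `bcnt`. -/
lemma card_bk_eq_i (r : ℕ) :
    ((frees μ i T r).filter (fun c => bkFun μ i T r c = i)).card = bcnt μ i T r := by
  have he : (frees μ i T r).filter (fun c => bkFun μ i T r c = i)
      = (frees μ i T r).filter (fun c => pos μ i T r c < bcnt μ i T r) := by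
    apply Finset.filter_congr
    intro c hc
    rw [bkFun_of_free (mem_frees.mp hc)]
    constructor
    · intro h; by_contra h'; rw [if_neg h'] at h; omega
    · intro h; rw [if_pos h]
  rw [he]
  exact rank_filter_card _ _ (bcnt_le r)

lemma card_bk_eq_i1 (r : ℕ) :
    ((frees μ i T r).filter (fun c => bkFun μ i T r c = i + 1)).card = acnt μ i T r := by
  have h2 : (frees μ i T r).filter (fun c => bkFun μ i T r c = i + 1)
      = (frees μ i T r).filter (fun c => ¬ bkFun μ i T r c = i) := by
    apply Finset.filter_congr
    intro c hc
    have := bkFun_mem_of_free (mem_frees.mp hc)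
    constructor
    · intro h; omega
    · intro h; omega
  have h3 := Finset.card_filter_add_card_filter_not
    (s := frees μ i T r) (p := fun c => bkFun μ i T r c = i)
  have h4 := card_bk_eq_i (μ := μ) (i := i) (T := T) r
  have h5 := acnt_add_bcnt (μ := μ) (i := i) (T := T) r
  rw [h2]
  omega

lemma pos_lt_acnt {r c : ℕ} (hc : Free μ i T r c) (hv : T r c = i) :
    pos μ i T r c < acnt μ i T r := by
  have hsub : (frees μ i T r).filter (· < c)
      ⊆ ((frees μ i T r).filter (fun c' => T r c' = i)).erase c := by
    intro x hx
    simp only [Finset.mem_filter, Finset.mem_erase] at hx ⊢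
    have hxf : Free μ i T r x := mem_frees.mp hx.1
    have hw : T r x ≤ T r c := T.row_weak hx.2 hc.mem
    have hxv : T r x = i := by rcases hxf.val with h | h <;> omega
    exact ⟨by omega, hx.1, hxv⟩
  have hcm : c ∈ (frees μ i T r).filter (fun c' => T r c' = i) := by
    simp [mem_frees.mpr hc, hv]
  have h1 := Finset.card_le_card hsub
  have h2 := Finset.card_erase_of_mem hcm
  have h3 : 0 < ((frees μ i T r).filter (fun c' => T r c' = i)).card :=
    Finset.card_pos.mpr ⟨c, hcm⟩
  rw [pos, acnt]
  omega

lemma acnt_le_pos {r c : ℕ} (hc : Free μ i T r c) (hv : T r c = i + 1) :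
    acnt μ i T r ≤ pos μ i T r c := by
  apply Finset.card_le_card
  intro x hx
  simp only [Finset.mem_filter] at hx ⊢
  have hxf : Free μ i T r x := mem_frees.mp hx.1
  refine ⟨hx.1, ?_⟩
  rcases lt_trichotomy x c with h | h | h
  · exact h
  · exfalso; subst h; have := hx.2; omega
  · have := T.row_weak h hxf.mem; have := hx.2; omega

end BK

namespace BK
open scoped Classical
variable {μ : YoungDiagram} {i : ℕ} {T : SemistandardYoungTableau μ}

lemma free_bk_of_free {r c : ℕ} (h : Free μ i T r c) : Free μ i (bk μ i T) r c := by
  refine ⟨h.mem, ?_⟩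
  have hbelow : bkFun μ i T (r+1) c ≠ i + 1 := by
    by_cases hmb : (r+1, c) ∈ μ
    · have h1 : T r c < T (r+1) c := T.col_strict (Nat.lt_succ_self r) hmb
      have h2 : i ≤ T r c := by rcases h.val with h' | h' <;> omega
      by_cases hv : T (r+1) c = i + 1
      · rcases h.2 with ⟨hx, hy⟩ | ⟨hx, -⟩
        · exact absurd hv hy
        · omega
      · rw [bkFun_of_not_val (by omega) hv]; omega
    · have hnf : ¬ Free μ i T (r+1) c := fun hf => hmb hf.mem
      rw [bkFun_of_not_free hnf, T.zeros hmb]; omega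
  have habove : r = 0 ∨ bkFun μ i T (r-1) c ≠ i := by
    by_cases hr : r = 0
    · exact Or.inl hr
    right
    have hma : (r-1, c) ∈ μ := μ.up_left_mem (Nat.sub_le r 1) le_rfl h.mem
    have h1 : T (r-1) c < T r c := T.col_strict (by omega) h.mem
    have h2 : T r c ≤ i + 1 := by rcases h.val with h' | h' <;> omega
    by_cases hv : T (r-1) c = i
    · rcases h.2 with ⟨hx, -⟩ | ⟨hx, hy | hy⟩
      · omega
      · omega
      · exact absurd hv hy
    · have hv' : T (r-1) c ≠ i + 1 := by omega
      rw [bkFun_of_not_val hv hv']; omega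
  rcases bkFun_mem_of_free h with hv | hv
  · exact Or.inl ⟨hv, hbelow⟩
  · exact Or.inr ⟨hv, habove⟩

lemma free_of_free_bk {r c : ℕ} (h : Free μ i (bk μ i T) r c) : Free μ i T r c := by
  by_contra hnf
  have heq : bkFun μ i T r c = T r c := bkFun_of_not_free hnf
  have hval : T r c = i ∨ T r c = i + 1 := by
    have hv := h.val
    rw [bk_apply, heq] at hv
    exact hv
  rcases hval with hu | hu
  · have hb : T (r+1) c = i + 1 := fixed_i h.mem hu hnf
    have hnfb : ¬ Free μ i T (r+1) c := by
      rintro ⟨-, ⟨hx, -⟩ | ⟨-, hy | hy⟩⟩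
      · omega
      · omega
      · rw [Nat.add_sub_cancel] at hy; omega
    have hBb : bkFun μ i T (r+1) c = i + 1 := by rw [bkFun_of_not_free hnfb, hb]
    rcases h.2 with ⟨-, hy⟩ | ⟨hx, -⟩
    · exact hy hBb
    · rw [bk_apply, heq] at hx; omega
  · obtain ⟨hr0, ha⟩ := fixed_i1 h.mem hu hnf
    have hnfa : ¬ Free μ i T (r-1) c := by
      rintro ⟨-, ⟨-, hy⟩ | ⟨hx, -⟩⟩
      · apply hy; rw [Nat.sub_add_cancel (by omega)]; exact hu
      · omega
    have hBa : bkFun μ i T (r-1) c = i := by rw [bkFun_of_not_free hnfa, ha]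
    rcases h.2 with ⟨hx, -⟩ | ⟨-, hy | hy⟩
    · rw [bk_apply, heq] at hx; omega
    · exact hr0 hy
    · exact hy hBa

lemma free_bk_iff {r c : ℕ} : Free μ i (bk μ i T) r c ↔ Free μ i T r c :=
  ⟨free_of_free_bk, free_bk_of_free⟩

lemma frees_bk (r : ℕ) : frees μ i (bk μ i T) r = frees μ i T r := by
  ext c
  rw [mem_frees, mem_frees, free_bk_iff]

lemma pos_bk (r c : ℕ) : pos μ i (bk μ i T) r c = pos μ i T r c := by
  rw [pos, pos, frees_bk]

lemma bcnt_bk (r : ℕ) : bcnt μ i (bk μ i T) r = acnt μ i T r := by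
  rw [bcnt, frees_bk]
  exact card_bk_eq_i1 r

lemma bk_bk : bk μ i (bk μ i T) = T := by
  ext r c
  show bkFun μ i (bk μ i T) r c = T r c
  by_cases hf : Free μ i T r c
  · have hfB : Free μ i (bk μ i T) r c := free_bk_of_free hf
    rw [bkFun_of_free hfB, pos_bk, bcnt_bk]
    rcases hf.val with hv | hv
    · rw [if_pos (pos_lt_acnt hf hv), hv]
    · rw [if_neg (not_lt.mpr (acnt_le_pos hf hv)), hv]
  · rw [bkFun_of_not_free (fun h => hf (free_of_free_bk h)), bk_apply, bkFun_of_not_free hf]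

end BK

namespace BK
open scoped Classical
variable {μ : YoungDiagram} {i : ℕ} {T : SemistandardYoungTableau μ}

/-- Number of cells of `T` with value `v`. -/
noncomputable def cnt (μ : YoungDiagram) (T : SemistandardYoungTableau μ) (v : ℕ) : ℕ :=
  (μ.cells.filter (fun x => T x.1 x.2 = v)).card

lemma card_split (s : Finset (ℕ × ℕ)) (p q : ℕ × ℕ → Prop)
    [DecidablePred p] [DecidablePred q] :
    (s.filter p).card = (s.filter (fun x => p x ∧ q x)).card
      + (s.filter (fun x => p x ∧ ¬ q x)).card := by
  rw [← Finset.filter_filter, ← Finset.filter_filter]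
  exact (Finset.card_filter_add_card_filter_not (p := q)).symm

lemma cnt_bk_of_ne (v : ℕ) (hv1 : v ≠ i) (hv2 : v ≠ i + 1) :
    cnt μ (bk μ i T) v = cnt μ T v := by
  unfold cnt
  congr 1
  apply Finset.filter_congr
  intro x hx
  show bkFun μ i T x.1 x.2 = v ↔ T x.1 x.2 = v
  by_cases hf : Free μ i T x.1 x.2
  · have h1 := bkFun_mem_of_free hf
    have h2 := hf.val
    constructor
    · intro h; omega
    · intro h; omega
  · rw [bkFun_of_not_free hf]

lemma not_free_below_fixed {r c : ℕ} (hb : T (r+1) c = i + 1) (ha : T r c = i) :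
    ¬ Free μ i T (r+1) c := by
  rintro ⟨-, ⟨hx, -⟩ | ⟨-, hy | hy⟩⟩
  · omega
  · omega
  · rw [Nat.add_sub_cancel] at hy; omega

lemma card_fixed_eq :
    (μ.cells.filter (fun x => T x.1 x.2 = i ∧ ¬ Free μ i T x.1 x.2)).card
      = (μ.cells.filter (fun x => T x.1 x.2 = i + 1 ∧ ¬ Free μ i T x.1 x.2)).card := by
  apply Finset.card_bij (fun x _ => (x.1 + 1, x.2))
  · intro a ha
    simp only [Finset.mem_filter, YoungDiagram.mem_cells] at ha
    obtain ⟨hm, hv, hnf⟩ := ha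
    have hb : T (a.1 + 1) a.2 = i + 1 := fixed_i hm hv hnf
    simp only [Finset.mem_filter, YoungDiagram.mem_cells]
    exact ⟨mem_of_val_ne_zero (by rw [hb]; omega), hb, not_free_below_fixed hb hv⟩
  · intro a ha b hb h
    rw [Prod.mk.injEq] at h
    exact Prod.ext (by omega) h.2
  · intro y hy
    simp only [Finset.mem_filter, YoungDiagram.mem_cells] at hy
    obtain ⟨hm, hv, hnf⟩ := hy
    obtain ⟨hr0, ha⟩ := fixed_i1 hm hv hnf
    have hm' : (y.1 - 1, y.2) ∈ μ := μ.up_left_mem (Nat.sub_le y.1 1) le_rfl hm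
    have hyy : y.1 - 1 + 1 = y.1 := Nat.sub_add_cancel (by omega)
    refine ⟨(y.1 - 1, y.2), ?_, ?_⟩
    · simp only [Finset.mem_filter, YoungDiagram.mem_cells]
      refine ⟨hm', ha, ?_⟩
      rintro ⟨-, ⟨-, hy'⟩ | ⟨hx, -⟩⟩
      · apply hy'; rw [hyy]; exact hv
      · omega
    · show (y.1 - 1 + 1, y.2) = y
      rw [hyy]

/-- Summing a per-row free-cell count over all rows. -/
lemma card_free_global (P : ℕ → ℕ → Prop) [∀ r c, Decidable (P r c)] :
    (μ.cells.filter (fun x => Free μ i T x.1 x.2 ∧ P x.1 x.2)).card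
      = ∑ r ∈ Finset.range (μ.colLen 0),
          ((frees μ i T r).filter (fun c => P r c)).card := by
  rw [Finset.card_eq_sum_card_fiberwise
    (f := Prod.fst) (t := Finset.range (μ.colLen 0)) ?_]
  · apply Finset.sum_congr rfl
    intro r hr
    apply Finset.card_bij (fun x _ => x.2)
    · intro a ha
      simp only [Finset.mem_filter, YoungDiagram.mem_cells] at ha
      obtain ⟨⟨hm, hf, hP⟩, hr1⟩ := ha
      subst hr1
      simp only [Finset.mem_filter]
      exact ⟨mem_frees.mpr hf, hP⟩
    · intro a ha b hb h
      simp only [Finset.mem_filter] at ha hb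
      exact Prod.ext (ha.2.trans hb.2.symm) h
    · intro c hc
      simp only [Finset.mem_filter] at hc
      have hf := mem_frees.mp hc.1
      refine ⟨(r, c), ?_, rfl⟩
      simp only [Finset.mem_filter, YoungDiagram.mem_cells]
      exact ⟨⟨hf.mem, hf, hc.2⟩, by trivial⟩
  · intro x hx
    simp only [Finset.mem_coe, Finset.mem_filter, YoungDiagram.mem_cells] at hx
    have hx0 : (x.1, 0) ∈ μ := μ.up_left_mem le_rfl (Nat.zero_le _) hx.1
    rw [Finset.mem_coe, Finset.mem_range, ← YoungDiagram.mem_iff_lt_colLen]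
    exact hx0

lemma cnt_bk_i : cnt μ (bk μ i T) i = cnt μ T (i + 1) := by
  unfold cnt
  show (μ.cells.filter (fun x => bkFun μ i T x.1 x.2 = i)).card = _
  rw [card_split μ.cells (fun x => bkFun μ i T x.1 x.2 = i) (fun x => Free μ i T x.1 x.2),
      card_split μ.cells (fun x => T x.1 x.2 = i + 1) (fun x => Free μ i T x.1 x.2)]
  have e3 : (μ.cells.filter (fun x => bkFun μ i T x.1 x.2 = i ∧ ¬ Free μ i T x.1 x.2)).card
      = (μ.cells.filter (fun x => T x.1 x.2 = i ∧ ¬ Free μ i T x.1 x.2)).card := by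
    congr 1
    apply Finset.filter_congr
    intro x hx
    constructor
    · rintro ⟨h1, h2⟩; rw [bkFun_of_not_free h2] at h1; exact ⟨h1, h2⟩
    · rintro ⟨h1, h2⟩; rw [bkFun_of_not_free h2]; exact ⟨h1, h2⟩
  have e4 : (μ.cells.filter (fun x => bkFun μ i T x.1 x.2 = i ∧ Free μ i T x.1 x.2)).card
      = (μ.cells.filter (fun x => T x.1 x.2 = i + 1 ∧ Free μ i T x.1 x.2)).card := by
    have r1 : (μ.cells.filter (fun x => bkFun μ i T x.1 x.2 = i ∧ Free μ i T x.1 x.2))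
        = (μ.cells.filter (fun x => Free μ i T x.1 x.2 ∧ bkFun μ i T x.1 x.2 = i)) := by
      apply Finset.filter_congr; intro x hx; exact and_comm
    have r2 : (μ.cells.filter (fun x => T x.1 x.2 = i + 1 ∧ Free μ i T x.1 x.2))
        = (μ.cells.filter (fun x => Free μ i T x.1 x.2 ∧ T x.1 x.2 = i + 1)) := by
      apply Finset.filter_congr; intro x hx; exact and_comm
    have c1 : (μ.cells.filter (fun x => Free μ i T x.1 x.2 ∧ bkFun μ i T x.1 x.2 = i)).card
        = ∑ r ∈ Finset.range (μ.colLen 0), bcnt μ i T r :=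
      (card_free_global (P := fun r c => bkFun μ i T r c = i)).trans
        (Finset.sum_congr rfl fun r _ => card_bk_eq_i r)
    have c2 : (μ.cells.filter (fun x => Free μ i T x.1 x.2 ∧ T x.1 x.2 = i + 1)).card
        = ∑ r ∈ Finset.range (μ.colLen 0), bcnt μ i T r :=
      card_free_global (P := fun r c => T r c = i + 1)
    rw [r1, r2, c1, c2]
  rw [e3, e4, card_fixed_eq]

lemma cnt_bk_i1 : cnt μ (bk μ i T) (i + 1) = cnt μ T i := by
  unfold cnt
  show (μ.cells.filter (fun x => bkFun μ i T x.1 x.2 = i + 1)).card = _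
  rw [card_split μ.cells (fun x => bkFun μ i T x.1 x.2 = i + 1) (fun x => Free μ i T x.1 x.2),
      card_split μ.cells (fun x => T x.1 x.2 = i) (fun x => Free μ i T x.1 x.2)]
  have e3 : (μ.cells.filter (fun x => bkFun μ i T x.1 x.2 = i + 1 ∧ ¬ Free μ i T x.1 x.2)).card
      = (μ.cells.filter (fun x => T x.1 x.2 = i + 1 ∧ ¬ Free μ i T x.1 x.2)).card := by
    congr 1
    apply Finset.filter_congr
    intro x hx
    constructor
    · rintro ⟨h1, h2⟩; rw [bkFun_of_not_free h2] at h1; exact ⟨h1, h2⟩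
    · rintro ⟨h1, h2⟩; rw [bkFun_of_not_free h2]; exact ⟨h1, h2⟩
  have e4 : (μ.cells.filter (fun x => bkFun μ i T x.1 x.2 = i + 1 ∧ Free μ i T x.1 x.2)).card
      = (μ.cells.filter (fun x => T x.1 x.2 = i ∧ Free μ i T x.1 x.2)).card := by
    have r1 : (μ.cells.filter (fun x => bkFun μ i T x.1 x.2 = i + 1 ∧ Free μ i T x.1 x.2))
        = (μ.cells.filter (fun x => Free μ i T x.1 x.2 ∧ bkFun μ i T x.1 x.2 = i + 1)) := by
      apply Finset.filter_congr; intro x hx; exact and_comm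
    have r2 : (μ.cells.filter (fun x => T x.1 x.2 = i ∧ Free μ i T x.1 x.2))
        = (μ.cells.filter (fun x => Free μ i T x.1 x.2 ∧ T x.1 x.2 = i)) := by
      apply Finset.filter_congr; intro x hx; exact and_comm
    have c1 : (μ.cells.filter (fun x => Free μ i T x.1 x.2 ∧ bkFun μ i T x.1 x.2 = i + 1)).card
        = ∑ r ∈ Finset.range (μ.colLen 0), acnt μ i T r :=
      (card_free_global (P := fun r c => bkFun μ i T r c = i + 1)).trans
        (Finset.sum_congr rfl fun r _ => card_bk_eq_i1 r)
    have c2 : (μ.cells.filter (fun x => Free μ i T x.1 x.2 ∧ T x.1 x.2 = i)).card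
        = ∑ r ∈ Finset.range (μ.colLen 0), acnt μ i T r :=
      card_free_global (P := fun r c => T r c = i)
    rw [r1, r2, c1, c2]
  rw [e3, e4, ← card_fixed_eq]

/-- The bound on entries is preserved by the BK move when `i + 1 < n`. -/
lemma bk_lt {n : ℕ} (hi : i + 1 < n) (hT : ∀ r c : ℕ, (r, c) ∈ μ → T r c < n)
    {r c : ℕ} (hm : (r, c) ∈ μ) : bk μ i T r c < n := by
  show bkFun μ i T r c < n
  by_cases hf : Free μ i T r c
  · rcases bkFun_mem_of_free hf with h | h <;> omega
  · rw [bkFun_of_not_free hf]; exact hT r c hm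

end BK

namespace BK
open scoped Classical

/-- Generic orbit-counting: if `ρ` acts on `I` with all orbits of size exactly `n`,
and `N` is constant along orbits, then `n` divides the sum of `N` over `I`. -/
lemma orbit_sum {β : Type*} [DecidableEq β] (n : ℕ) (hn : 0 < n) (ρ : β → β) (N : β → ℕ)
    (I : Finset β) :
    Set.InjOn ρ I →
    (∀ x ∈ I, ρ x ∈ I) →
    (∀ x ∈ I, N (ρ x) = N x) →
    (∀ x ∈ I, ∀ j, 0 < j → j < n → ρ^[j] x ≠ x) →
    (∀ x ∈ I, ρ^[n] x = x) →
    n ∣ ∑ x ∈ I, N x := by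
  induction I using Finset.strongInduction with
  | _ I ih =>
    intro hinj hstab hN hfree hper
    rcases I.eq_empty_or_nonempty with rfl | ⟨a, ha⟩
    · simp
    have hiter : ∀ j, ∀ x ∈ I, ρ^[j] x ∈ I := by
      intro j
      induction j with
      | zero => intro x hx; simpa using hx
      | succ j ihj =>
        intro x hx
        rw [Function.iterate_succ_apply']
        exact hstab _ (ihj x hx)
    have hiterinj : ∀ j, ∀ x ∈ I, ∀ y ∈ I, ρ^[j] x = ρ^[j] y → x = y := by
      intro j
      induction j with
      | zero => intro x _ y _ h; simpa using h
      | succ j ihj =>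
        intro x hx y hy h
        rw [Function.iterate_succ_apply', Function.iterate_succ_apply'] at h
        exact ihj x hx y hy (hinj (hiter j x hx) (hiter j y hy) h)
    set O : Finset β := (Finset.range n).image (fun j => ρ^[j] a) with hO
    have hOsub : O ⊆ I := by
      intro x hx
      simp only [hO, Finset.mem_image, Finset.mem_range] at hx
      obtain ⟨j, -, rfl⟩ := hx
      exact hiter j a ha
    have hjinj : ∀ j ∈ Finset.range n, ∀ k ∈ Finset.range n,
        ρ^[j] a = ρ^[k] a → j = k := by
      have key : ∀ j k, j < n → k < n → j ≤ k → ρ^[j] a = ρ^[k] a → j = k := by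
        intro j k hjn hkn hjk h
        by_contra hne
        have hd : 0 < k - j := by omega
        have : ρ^[j] (ρ^[k-j] a) = ρ^[j] a := by
          rw [← Function.iterate_add_apply]
          rw [show j + (k - j) = k by omega]
          exact h.symm
        have := hiterinj j _ (hiter _ a ha) a ha this
        exact hfree a ha (k - j) hd (by omega) this
      intro j hj k hk h
      simp only [Finset.mem_range] at hj hk
      rcases Nat.le_total j k with hle | hle
      · exact key j k hj hk hle h
      · exact (key k j hk hj hle h.symm).symm
    have hcardO : O.card = n := by
      rw [hO, Finset.card_image_of_injOn, Finset.card_range]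
      intro j hj k hk h
      exact hjinj j hj k hk h
    have hNconst : ∀ j, N (ρ^[j] a) = N a := by
      intro j
      induction j with
      | zero => simp
      | succ j ihj =>
        rw [Function.iterate_succ_apply', hN _ (hiter j a ha)]
        exact ihj
    have hsumO : ∑ x ∈ O, N x = n * N a := by
      rw [hO, Finset.sum_image (fun j hj k hk h => hjinj j hj k hk h)]
      rw [Finset.sum_congr rfl (fun j _ => hNconst j), Finset.sum_const, Finset.card_range,
        smul_eq_mul]
    have haO : a ∈ O := by
      simp only [hO, Finset.mem_image, Finset.mem_range]
      exact ⟨0, hn, rfl⟩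
    have hssub : I \ O ⊂ I := Finset.sdiff_ssubset hOsub ⟨a, haO⟩
    have hstab' : ∀ x ∈ I \ O, ρ x ∈ I \ O := by
      intro x hx
      rw [Finset.mem_sdiff] at hx ⊢
      refine ⟨hstab x hx.1, ?_⟩
      intro hmem
      simp only [hO, Finset.mem_image, Finset.mem_range] at hmem
      obtain ⟨j, hjn, hj⟩ := hmem
      rcases Nat.eq_zero_or_pos j with rfl | hj0
      · simp only [Function.iterate_zero_apply] at hj
        have e1 : ρ^[n] a = ρ (ρ^[n-1] a) := by
          rw [show n = n - 1 + 1 by omega]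
          exact Function.iterate_succ_apply' ρ (n-1) a
        have hx1 : ρ x = ρ (ρ^[n-1] a) := by
          rw [← e1, hper a ha]; exact hj.symm
        have := hinj hx.1 (hiter (n-1) a ha) hx1
        apply hx.2
        simp only [hO, Finset.mem_image, Finset.mem_range]
        exact ⟨n - 1, by omega, this.symm⟩
      · have e1 : ρ^[j] a = ρ (ρ^[j-1] a) := by
          rw [show j = j - 1 + 1 by omega]
          exact Function.iterate_succ_apply' ρ (j-1) a
        have hx1 : ρ x = ρ (ρ^[j-1] a) := by
          rw [← e1]; exact hj.symm
        have := hinj hx.1 (hiter (j-1) a ha) hx1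
        apply hx.2
        simp only [hO, Finset.mem_image, Finset.mem_range]
        exact ⟨j - 1, by omega, this.symm⟩
    have hrest : n ∣ ∑ x ∈ I \ O, N x := by
      apply ih _ hssub
      · exact hinj.mono (by intro x hx; exact (Finset.mem_sdiff.mp hx).1)
      · exact hstab'
      · intro x hx; exact hN x (Finset.mem_sdiff.mp hx).1
      · intro x hx; exact hfree x (Finset.mem_sdiff.mp hx).1
      · intro x hx; exact hper x (Finset.mem_sdiff.mp hx).1
    have hsplit : ∑ x ∈ I \ O, N x + ∑ x ∈ O, N x = ∑ x ∈ I, N x :=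
      Finset.sum_sdiff hOsub
    rw [← hsplit, hsumO]
    exact Nat.dvd_add hrest ⟨N a, rfl⟩

/-- The key arithmetic fact: a function on `range n` with a nontrivial cyclic symmetry
has a sum divisible by a nontrivial divisor of `n`. -/
lemma period_coprime (n m j : ℕ) (hn : 0 < n) (hj0 : 0 < j) (hjn : j < n)
    (α : ℕ → ℕ) (hper : ∀ v, v < n → α ((v + j) % n) = α v)
    (hsum : ∑ v ∈ Finset.range n, α v = m) (hco : Nat.Coprime n m) : False := by
  set g := Nat.gcd n j with hg
  have hg0 : 0 < g := Nat.gcd_pos_of_pos_right n hj0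
  set e := n / g with he'
  have hgn : g ∣ n := Nat.gcd_dvd_left n j
  have hgj : g ∣ j := Nat.gcd_dvd_right n j
  have he : e * g = n := Nat.div_mul_cancel hgn
  have hjg : (j / g) * g = j := Nat.div_mul_cancel hgj
  have hcop : Nat.Coprime e (j / g) := Nat.coprime_div_gcd_div_gcd hg0
  have he1 : 1 < e := by
    rcases Nat.lt_or_ge e 2 with h | h
    · interval_cases e
      · omega
      · have : n ∣ j := by rw [← he] at hgn ⊢; simpa using hgj
        have := Nat.le_of_dvd hj0 this
        omega
    · exact h
  have hiterf : ∀ t v, v < n → (fun v => (v + j) % n)^[t] v = (v + t * j) % n := by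
    intro t
    induction t with
    | zero => intro v hv; simpa using (Nat.mod_eq_of_lt hv).symm
    | succ t iht =>
      intro v hv
      rw [Function.iterate_succ_apply', iht v hv]
      show ((v + t * j) % n + j) % n = (v + (t + 1) * j) % n
      rw [Nat.mod_add_mod]
      congr 1
      ring
  have hdvd : e ∣ m := by
    rw [← hsum]
    apply orbit_sum e (by omega) (fun v => (v + j) % n) α (Finset.range n)
    · intro x hx y hy h
      simp only [Finset.mem_coe, Finset.mem_range] at hx hy
      have : x % n = y % n := Nat.ModEq.add_right_cancel' j h
      rwa [Nat.mod_eq_of_lt hx, Nat.mod_eq_of_lt hy] at this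
    · intro x hx
      simp only [Finset.mem_range] at hx ⊢
      exact Nat.mod_lt _ hn
    · intro x hx
      exact hper x (Finset.mem_range.mp hx)
    · intro x hx t ht0 hte habs
      rw [hiterf t x (Finset.mem_range.mp hx)] at habs
      have hxn := Finset.mem_range.mp hx
      have hmod : (x + t * j) % n = x % n := by rw [habs, Nat.mod_eq_of_lt hxn]
      have hdv : n ∣ t * j := by
        have h1 : x ≤ x + t * j := Nat.le_add_right _ _
        have := (Nat.modEq_iff_dvd' h1).mp hmod.symm
        simpa using this
      have h2 : e * g ∣ (t * (j / g)) * g := by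
        rw [← he] at hdv
        calc e * g ∣ t * j := hdv
          _ = (t * (j / g)) * g := by rw [mul_assoc, hjg]
      have h3 : e ∣ t * (j / g) := (Nat.mul_dvd_mul_iff_right hg0).mp h2
      have h4 : e ∣ t := hcop.dvd_of_dvd_mul_right h3
      have := Nat.le_of_dvd ht0 h4
      omega
    · intro x hx
      rw [hiterf e x (Finset.mem_range.mp hx)]
      have : e * j = (j / g) * n := by
        calc e * j = e * ((j / g) * g) := by rw [hjg]
          _ = (j / g) * (e * g) := by ring
          _ = (j / g) * n := by rw [he]
      rw [this, Nat.add_mul_mod_self_right, Nat.mod_eq_of_lt (Finset.mem_range.mp hx)]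
  have hen : e ∣ n := ⟨g, he.symm⟩
  have hd1 : e ∣ Nat.gcd n m := Nat.dvd_gcd hen hdvd
  rw [hco] at hd1
  have := Nat.le_of_dvd one_pos hd1
  omega

end BK

namespace BK
open scoped Classical
variable {μ : YoungDiagram} {n : ℕ}

noncomputable def bkS (μ : YoungDiagram) (n i : ℕ) (hi : i + 1 < n) (T : SSYTn μ n) :
    SSYTn μ n :=
  ⟨bk μ i T.1, fun r c hm => bk_lt hi T.2 hm⟩

lemma bkS_bkS (i : ℕ) (hi : i + 1 < n) (T : SSYTn μ n) :
    bkS μ n i hi (bkS μ n i hi T) = T := Subtype.ext bk_bk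

/-- The content function of a bounded tableau. -/
noncomputable def cntF (μ : YoungDiagram) (n : ℕ) (T : SSYTn μ n) : ℕ → ℕ :=
  fun v => cnt μ T.1 v

/-- The number of tableaux with a given content. -/
noncomputable def Ncnt (μ : YoungDiagram) (n : ℕ) (α : ℕ → ℕ) : ℕ :=
  (Finset.univ.filter (fun T : SSYTn μ n => cntF μ n T = α)).card

lemma cntF_bkS (i : ℕ) (hi : i + 1 < n) (T : SSYTn μ n) :
    cntF μ n (bkS μ n i hi T) = cntF μ n T ∘ ⇑(Equiv.swap i (i+1)) := by
  funext v
  show cnt μ (bk μ i T.1) v = cnt μ T.1 (Equiv.swap i (i+1) v)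
  by_cases h1 : v = i
  · subst h1; rw [Equiv.swap_apply_left]; exact cnt_bk_i
  by_cases h2 : v = i + 1
  · subst h2; rw [Equiv.swap_apply_right]; exact cnt_bk_i1
  · rw [Equiv.swap_apply_of_ne_of_ne h1 h2]; exact cnt_bk_of_ne v h1 h2

lemma comp_swap_swap {γ : Type*} (f : ℕ → γ) (i : ℕ) :
    (f ∘ ⇑(Equiv.swap i (i+1))) ∘ ⇑(Equiv.swap i (i+1)) = f := by
  funext v
  show f (Equiv.swap i (i+1) (Equiv.swap i (i+1) v)) = f v
  rw [Equiv.swap_apply_self]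

lemma Ncnt_swap (i : ℕ) (hi : i + 1 < n) (α : ℕ → ℕ) :
    Ncnt μ n (α ∘ ⇑(Equiv.swap i (i+1))) = Ncnt μ n α := by
  apply Finset.card_bij' (fun T _ => bkS μ n i hi T) (fun T _ => bkS μ n i hi T)
  · intro T hT
    simp only [Finset.mem_filter, Finset.mem_univ, true_and] at hT ⊢
    rw [cntF_bkS, hT, comp_swap_swap]
  · intro T hT
    simp only [Finset.mem_filter, Finset.mem_univ, true_and] at hT ⊢
    rw [cntF_bkS, hT]
  · intro T _; exact bkS_bkS i hi T
  · intro T _; exact bkS_bkS i hi T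

/-- The cycle `(0 1 … j)` as a product of adjacent transpositions. -/
def cyc : ℕ → Equiv.Perm ℕ
  | 0 => 1
  | (j+1) => cyc j * Equiv.swap j (j+1)

lemma cyc_eval : ∀ j v : ℕ, cyc j v = if v < j then v + 1 else if v = j then 0 else v := by
  intro j
  induction j with
  | zero =>
    intro v
    show (1 : Equiv.Perm ℕ) v = _
    rw [Equiv.Perm.one_apply]
    split_ifs with h1 h2 <;> omega
  | succ j ihj =>
    intro v
    show (cyc j * Equiv.swap j (j+1)) v = _
    rw [Equiv.Perm.mul_apply]
    rcases lt_trichotomy v j with h | h | h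
    · rw [Equiv.swap_apply_of_ne_of_ne (by omega) (by omega), ihj]
      split_ifs <;> omega
    · subst h
      rw [Equiv.swap_apply_left, ihj]
      split_ifs <;> omega
    · rcases Nat.eq_or_lt_of_le h with h' | h'
      · rw [← h', Equiv.swap_apply_right, ihj]
        split_ifs <;> omega
      · rw [Equiv.swap_apply_of_ne_of_ne (by omega) (by omega), ihj]
        split_ifs <;> omega

lemma Ncnt_cyc (hn : 0 < n) : ∀ j, j ≤ n - 1 → ∀ α : ℕ → ℕ,
    Ncnt μ n (α ∘ ⇑(cyc j)) = Ncnt μ n α := by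
  intro j
  induction j with
  | zero =>
    intro _ α
    have : α ∘ ⇑(cyc 0) = α := by
      funext v
      show α ((1 : Equiv.Perm ℕ) v) = α v
      rw [Equiv.Perm.one_apply]
    rw [this]
  | succ j ihj =>
    intro hj α
    have hcomp : α ∘ ⇑(cyc (j+1)) = (α ∘ ⇑(cyc j)) ∘ ⇑(Equiv.swap j (j+1)) := by
      funext v
      show α ((cyc j * Equiv.swap j (j+1)) v) = _
      rw [Equiv.Perm.mul_apply]
      rfl
    rw [hcomp, Ncnt_swap j (by omega) (α ∘ ⇑(cyc j)), ihj (by omega)]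

lemma cyc_iter (hn : 0 < n) (t : ℕ) : ∀ v : ℕ, v < n → (⇑(cyc (n-1)))^[t] v = (v + t) % n := by
  induction t with
  | zero => intro v hv; simpa using (Nat.mod_eq_of_lt hv).symm
  | succ t iht =>
    intro v hv
    rw [Function.iterate_succ_apply', iht v hv]
    have hw : (v + t) % n < n := Nat.mod_lt _ hn
    rw [cyc_eval]
    have key : (v + (t+1)) % n = ((v + t) % n + 1) % n := by
      rw [Nat.mod_add_mod]
      exact congrArg (fun x => x % n) (by omega)
    split_ifs with h1 h2
    · rw [key]; exact (Nat.mod_eq_of_lt (by omega)).symm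
    · rw [key, h2, show n - 1 + 1 = n by omega, Nat.mod_self]
    · omega

lemma cyc_fix (hn : 0 < n) (v : ℕ) (hv : n ≤ v) : cyc (n-1) v = v := by
  rw [cyc_eval]
  split_ifs <;> omega

lemma sum_cnt (T : SSYTn μ n) : ∑ v ∈ Finset.range n, cnt μ T.1 v = μ.card := by
  unfold cnt
  rw [← Finset.card_eq_sum_card_fiberwise
    (f := fun x : ℕ × ℕ => T.1 x.1 x.2) (t := Finset.range n) ?_]
  intro x hx
  simp only [Finset.mem_coe, Finset.mem_range]
  rw [Finset.mem_coe, YoungDiagram.mem_cells] at hx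
  exact T.2 x.1 x.2 hx

end BK

namespace BK

lemma filter_card_irrel {γ : Type*} (s : Finset γ) (p : γ → Prop) (h1 h2 : DecidablePred p) :
    (@Finset.filter _ p h1 s).card = (@Finset.filter _ p h2 s).card := by
  cases Subsingleton.elim h1 h2; rfl

end BK

theorem stmt7 (n : ℕ) (μ : YoungDiagram) (hlen : μ.colLen 0 < n)
    (hgcd : Nat.Coprime n μ.card) :
    n ∣ Fintype.card (SSYTn μ n) := by
  classical
  have hn : 0 < n := Nat.lt_of_le_of_lt (Nat.zero_le _) hlen
  set σ : Equiv.Perm ℕ := BK.cyc (n-1) with hσ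
  set ρ : (ℕ → ℕ) → (ℕ → ℕ) := fun α => α ∘ ⇑σ with hρ
  set I : Finset (ℕ → ℕ) := Finset.univ.image (BK.cntF μ n) with hI
  have hiter : ∀ (t : ℕ) (α : ℕ → ℕ), ρ^[t] α = α ∘ (⇑σ)^[t] := by
    intro t
    induction t with
    | zero => intro α; simp
    | succ t iht =>
      intro α
      rw [Function.iterate_succ_apply', iht]
      funext v
      show α ((⇑σ)^[t] (σ v)) = α ((⇑σ)^[t+1] v)
      rw [Function.iterate_succ_apply]
  have hNrot : ∀ α, BK.Ncnt μ n (ρ α) = BK.Ncnt μ n α := fun α =>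
    BK.Ncnt_cyc hn (n-1) le_rfl α
  have hmemI : ∀ α, α ∈ I ↔ 0 < BK.Ncnt μ n α := by
    intro α
    constructor
    · intro h
      rw [hI, Finset.mem_image] at h
      obtain ⟨T, -, rfl⟩ := h
      apply Finset.card_pos.mpr
      exact ⟨T, Finset.mem_filter.mpr ⟨Finset.mem_univ T, rfl⟩⟩
    · intro h
      obtain ⟨T, hT⟩ := Finset.card_pos.mp h
      rw [Finset.mem_filter] at hT
      rw [hI, Finset.mem_image]
      exact ⟨T, Finset.mem_univ T, hT.2⟩
  have hmain : n ∣ ∑ α ∈ I, BK.Ncnt μ n α := by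
    apply BK.orbit_sum n hn ρ (BK.Ncnt μ n) I
    · intro a _ b _ h
      funext v
      have h2 : a (σ (σ.symm v)) = b (σ (σ.symm v)) := congrFun h (σ.symm v)
      rwa [Equiv.apply_symm_apply] at h2
    · intro α hα
      rw [hmemI] at hα ⊢
      rw [hNrot]; exact hα
    · intro α _; exact hNrot α
    · intro α hα j hj0 hjn habs
      rw [hmemI] at hα
      obtain ⟨T, hT⟩ := Finset.card_pos.mp hα
      rw [Finset.mem_filter] at hT
      have hsum : ∑ v ∈ Finset.range n, α v = μ.card := by
        rw [← hT.2]; exact BK.sum_cnt T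
      have hper : ∀ v, v < n → α ((v + j) % n) = α v := by
        intro v hv
        have h2 : α ((⇑σ)^[j] v) = α v := by
          have := congrFun habs v
          rw [hiter j α] at this
          exact this
        have h3 : (⇑σ)^[j] v = (v + j) % n := BK.cyc_iter hn j v hv
        rw [← h3]
        exact h2
      exact BK.period_coprime n μ.card j hn hj0 hjn α hper hsum hgcd
    · intro α _
      rw [hiter n α]
      funext v
      show α ((⇑σ)^[n] v) = α v
      congr 1
      by_cases hv : v < n
      · rw [BK.cyc_iter hn n v hv, Nat.add_mod_right, Nat.mod_eq_of_lt hv]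
      · exact Function.iterate_fixed (BK.cyc_fix hn v (by omega)) n
  have hcard : Fintype.card (SSYTn μ n) = ∑ α ∈ I, BK.Ncnt μ n α := by
    have h1 : Fintype.card (SSYTn μ n) = (Finset.univ : Finset (SSYTn μ n)).card := rfl
    rw [h1, Finset.card_eq_sum_card_fiberwise
      (f := BK.cntF μ n) (t := I) (fun x _ => Finset.mem_image_of_mem _ (Finset.mem_univ x))]
    apply Finset.sum_congr rfl
    intro α _
    exact BK.filter_card_irrel _ _ _ _
  rw [hcard]
  exact hmain
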